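/- For all n ≥ 1: ∑_{k=1}^{n} (-1)^{k-1}·T(n,k)·(k!)² = (-1)^{n-1}·G_{2n+2}, where T(n,k) are the central factorial numbers of the second kind. -/

import Mathlib

/-- Central factorial numbers of the second kind:
T(n,k) = T(n-1,k-1) + k² T(n-1,k), T(0,k)=[k=0], T(n,0)=[n=0]. -/
def centralFactorialT : ℕ → ℕ → ℕ
  | 0, 0 => 1
  | 0, _ + 1 => 0
  | _ + 1, 0 => 0
  | n + 1, k + 1 => centralFactorialT n k + (k + 1) ^ 2 * centralFactorialT n (k + 1)

open PowerSeries in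
/-- The exponential generating function 2z/(1+e^z) of the Genocchi numbers. -/
noncomputable def genocchiSeries : PowerSeries ℚ :=
  2 * PowerSeries.X * (1 + PowerSeries.exp ℚ)⁻¹

/-- The unsigned Genocchi numbers `G (2n)` : since
2z/(1+e^z) = z + ∑_{n≥1} (-1)^n G_{2n} z^{2n}/(2n)!, we recover
G_{2n} = (-1)^n (2n)! [z^{2n}] (2z/(1+e^z)); this also gives G 0 = 0. -/
noncomputable def genocchi (n : ℕ) : ℚ :=
  (-1) ^ n * (2 * n).factorial * PowerSeries.coeff (R := ℚ) (2 * n) genocchiSeries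

open PowerSeries Finset

noncomputable def EE : PowerSeries ℚ := exp ℚ
noncomputable def uu : PowerSeries ℚ := (EE - 1) * (1 + EE)⁻¹
noncomputable def tt : PowerSeries ℚ := (1 - uu^2)⁻¹
noncomputable def VV : PowerSeries ℚ := 4*tt - 4
noncomputable def WW : PowerSeries ℚ := 4*uu*tt

lemma dE : d⁄dX ℚ EE = EE := by
  ext n
  simp [EE, coeff_derivative, coeff_exp, Nat.factorial_succ]
  field_simp

lemma cc_oneE : constantCoeff (R := ℚ) (1 + EE) = 2 := by
  simp [EE, constantCoeff_exp]; norm_num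

lemma oneE_ne : (1 + EE) ≠ 0 := by
  intro h
  have := congrArg (constantCoeff (R := ℚ)) h
  rw [cc_oneE] at this; simp at this

lemma hinvE : (1 + EE) * (1 + EE)⁻¹ = 1 :=
  PowerSeries.mul_inv_cancel _ (by rw [cc_oneE]; norm_num)

lemma huE : uu * (1 + EE) = EE - 1 := by
  rw [uu, mul_assoc, mul_comm ((1+EE)⁻¹), hinvE, mul_one]

lemma u0 : constantCoeff (R := ℚ) uu = 0 := by
  have := congrArg (constantCoeff (R := ℚ)) huE
  rw [map_mul, cc_oneE] at this
  simp [EE, constantCoeff_exp] at this ⊢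
  linarith

lemma hd1 : d⁄dX ℚ uu * (1 + EE) + uu * EE = EE := by
  have := congrArg (d⁄dX ℚ) huE
  simpa [dE, smul_eq_mul, mul_comm, add_comm] using this

lemma du2 : (2 : PowerSeries ℚ) * d⁄dX ℚ uu = 1 - uu^2 := by
  apply mul_right_cancel₀ oneE_ne
  linear_combination 2*hd1 + (uu - 1)*huE

lemma two_ne : (2 : PowerSeries ℚ) ≠ 0 := by
  intro h
  have := congrArg (constantCoeff (R := ℚ)) h
  rw [map_ofNat] at this
  simp at this

lemma du : d⁄dX ℚ uu = C (R := ℚ) (1/2) * (1 - uu^2) := by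
  apply mul_left_cancel₀ two_ne
  rw [du2]
  rw [show (2:PowerSeries ℚ) = C (R := ℚ) 2 from (map_ofNat (C (R := ℚ)) 2).symm,
    ← mul_assoc, ← map_mul]
  norm_num

lemma ccS : constantCoeff (R := ℚ) (1 - uu^2) = 1 := by
  simp [u0]

lemma S_ne : (1 - uu^2) ≠ 0 := by
  intro h
  have := congrArg (constantCoeff (R := ℚ)) h
  rw [ccS] at this; simp at this

lemma hSt : (1 - uu^2) * tt = 1 :=
  PowerSeries.mul_inv_cancel _ (by rw [ccS]; norm_num)

lemma dS : d⁄dX ℚ (1 - uu^2) = -(uu * (1 - uu^2)) := by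
  have : d⁄dX ℚ (1 - uu^2) = -(2 * uu * d⁄dX ℚ uu) := by
    simp [pow_two, smul_eq_mul]; ring
  rw [this, du]
  have hc : C (R := ℚ) (1/2) * C (R := ℚ) 2 = 1 := by rw [← map_mul]; norm_num
  have h2 : (2:PowerSeries ℚ) = C (R := ℚ) 2 := (map_ofNat (C (R := ℚ)) 2).symm
  rw [h2]
  linear_combination (uu^3 - uu) * hc

lemma dt : d⁄dX ℚ tt = uu * tt := by
  apply mul_left_cancel₀ S_ne
  have h := congrArg (d⁄dX ℚ) hSt
  rw [Derivation.map_one_eq_zero] at h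
  have h2 : d⁄dX ℚ ((1 - uu^2) * tt) =
      d⁄dX ℚ (1 - uu^2) * tt + (1 - uu^2) * d⁄dX ℚ tt := by
    simp [smul_eq_mul]; ring
  rw [h2, dS] at h
  linear_combination h

lemma d4 : d⁄dX ℚ (4:PowerSeries ℚ) = 0 := by
  rw [show (4:PowerSeries ℚ) = C (R := ℚ) 4 from (map_ofNat (C (R := ℚ)) 4).symm, derivative_C]

lemma dV : d⁄dX ℚ VV = WW := by
  rw [VV, WW]
  have : d⁄dX ℚ ((4:PowerSeries ℚ)*tt - 4) = 4 * d⁄dX ℚ tt := by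
    simp [smul_eq_mul, d4]
  rw [this, dt]; ring

lemma hW2 : WW^2 = VV^2 + 4*VV := by
  rw [WW, VV]
  linear_combination (-16*tt) * hSt

lemma dW : d⁄dX ℚ WW = VV + 2 := by
  rw [WW]
  have h : d⁄dX ℚ ((4:PowerSeries ℚ)*uu*tt) = 4*(d⁄dX ℚ uu * tt + uu * d⁄dX ℚ tt) := by
    simp [smul_eq_mul, d4]; ring
  rw [h, du, dt, VV]
  have h2 : (2:PowerSeries ℚ) = C (R := ℚ) 2 := (map_ofNat (C (R := ℚ)) 2).symm
  have h4 : (4:PowerSeries ℚ) = C (R := ℚ) 4 := (map_ofNat (C (R := ℚ)) 4).symm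
  have hc : C (R := ℚ) 4 * C (R := ℚ) (1/2) = C (R := ℚ) 2 := by rw [← map_mul]; norm_num
  rw [h2, h4]
  linear_combination (tt - uu^2*tt) * hc + (C (R := ℚ) 2 - C (R := ℚ) 4) * hSt

lemma dVpow (k : ℕ) : d⁄dX ℚ (VV^(k+1)) = C (R := ℚ) ((k:ℚ)+1) * VV^k * WW := by
  induction k with
  | zero => simp [dV]
  | succ j ih =>
    have : VV^(j+2) = VV^(j+1) * VV := by ring
    rw [this]
    have hl : d⁄dX ℚ (VV^(j+1) * VV) = d⁄dX ℚ (VV^(j+1)) * VV + VV^(j+1) * WW := by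
      simp [smul_eq_mul, dV]; ring
    rw [hl, ih]
    have : C (R := ℚ) ((j:ℚ)+1+1) = C (R := ℚ) ((j:ℚ)+1) + 1 := by rw [map_add, map_one]
    push_cast
    rw [this]
    ring

lemma d2Vpow (k : ℕ) : d⁄dX ℚ (d⁄dX ℚ (VV^(k+1))) =
    C (R := ℚ) (((k:ℚ)+1)^2) * VV^(k+1) + C (R := ℚ) (2*((k:ℚ)+1)*(2*(k:ℚ)+1)) * VV^k := by
  rw [dVpow]
  have hl : d⁄dX ℚ (C (R := ℚ) ((k:ℚ)+1) * VV^k * WW) =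
      C (R := ℚ) ((k:ℚ)+1) * (d⁄dX ℚ (VV^k) * WW + VV^k * (VV+2)) := by
    simp [smul_eq_mul, dW]; ring
  rw [hl]
  cases k with
  | zero =>
    simp [map_ofNat]
  | succ j =>
    rw [dVpow j]
    push_cast
    simp only [map_add, map_mul, map_pow, map_one, map_ofNat]
    linear_combination ((C (R := ℚ) (j:ℚ) + 2) * (C (R := ℚ) (j:ℚ) + 1) * VV^j) * hW2

lemma cct : constantCoeff (R := ℚ) tt = 1 := by
  have := congrArg (constantCoeff (R := ℚ)) hSt
  rw [map_mul, ccS, one_mul, map_one] at this; exact this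

lemma ccV : constantCoeff (R := ℚ) VV = 0 := by
  rw [VV, map_sub, map_mul, cct, map_ofNat]; ring

lemma ccW : constantCoeff (R := ℚ) WW = 0 := by
  rw [WW, map_mul, map_mul, u0, map_ofNat]; ring

lemma coeff_d2 (f : PowerSeries ℚ) (n : ℕ) :
    coeff (R := ℚ) n (d⁄dX ℚ (d⁄dX ℚ f)) = coeff (R := ℚ) (n+2) f * (((n:ℚ)+1)*((n:ℚ)+2)) := by
  rw [coeff_derivative, coeff_derivative]
  push_cast; ring

lemma lemV : ∀ m, (∀ k, ((2*m).factorial : ℚ) * coeff (R := ℚ) (2*m) (VV^k)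
      = ((2*k).factorial : ℚ) * (centralFactorialT m k : ℚ))
    ∧ (∀ k, coeff (R := ℚ) (2*m+1) (VV^k) = 0) := by
  intro m
  induction m with
  | zero =>
    constructor
    · intro k
      have h0 : coeff (R := ℚ) (2*0) (VV^k) = (0:ℚ)^k := by
        rw [show 2*0 = 0 from rfl, coeff_zero_eq_constantCoeff, map_pow, ccV]
      rw [h0]
      cases k with
      | zero => simp [centralFactorialT]
      | succ j => simp [centralFactorialT]
    · intro k
      cases k with
      | zero => simp
      | succ j =>
        have h1 : coeff (R := ℚ) (2*0+1) (VV^(j+1)) = coeff (R := ℚ) 0 (d⁄dX ℚ (VV^(j+1))) := by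
          rw [coeff_derivative]; push_cast; ring
        rw [h1, dVpow, coeff_zero_eq_constantCoeff, map_mul, map_mul, ccW]
        ring
  | succ m ih =>
    obtain ⟨ihe, iho⟩ := ih
    constructor
    · intro k
      cases k with
      | zero =>
        rw [show centralFactorialT (m+1) 0 = 0 from rfl, pow_zero]
        rw [coeff_one, if_neg (by omega : ¬ 2*(m+1) = 0)]
        push_cast; ring
      | succ j =>
        have hc : coeff (R := ℚ) (2*m) (d⁄dX ℚ (d⁄dX ℚ (VV^(j+1))))
            = coeff (R := ℚ) (2*m+2) (VV^(j+1)) * ((2*(m:ℚ)+1)*(2*(m:ℚ)+2)) := by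
          rw [coeff_d2]; push_cast; ring
        rw [d2Vpow] at hc
        rw [map_add, coeff_C_mul, coeff_C_mul] at hc
        have hf1 : ((2*m+2).factorial : ℚ) = (2*(m:ℚ)+2)*(2*(m:ℚ)+1)*((2*m).factorial:ℚ) := by
          rw [show 2*m+2 = (2*m+1)+1 by ring, Nat.factorial_succ, Nat.factorial_succ]
          push_cast; ring
        have hf2 : ((2*(j+1)).factorial : ℚ) = (2*j+2)*(2*j+1)*((2*j).factorial:ℚ) := by
          rw [show 2*(j+1) = (2*j+1)+1 by ring, Nat.factorial_succ, Nat.factorial_succ]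
          push_cast; ring
        have hT : (centralFactorialT (m+1) (j+1) : ℚ)
            = (centralFactorialT m j : ℚ) + ((j:ℚ)+1)^2 * (centralFactorialT m (j+1) : ℚ) := by
          rw [show centralFactorialT (m+1) (j+1)
              = centralFactorialT m j + (j+1)^2 * centralFactorialT m (j+1) from rfl]
          push_cast; ring
        have h2m : (2*(m+1)) = 2*m+2 := by ring
        rw [h2m]
        have e1 := ihe (j+1)
        have e2 := ihe j
        linear_combination (coeff (R := ℚ) (2*m+2) (VV^(j+1))) * hf1
          - ((2*m).factorial:ℚ) * hc
          + (((j:ℚ)+1)^2) * e1 + (2*((j:ℚ)+1)*(2*(j:ℚ)+1)) * e2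
          - ((2*(j+1)).factorial:ℚ) * hT - (centralFactorialT m j : ℚ) * hf2
    · intro k
      cases k with
      | zero => simp
      | succ j =>
        have hc : coeff (R := ℚ) (2*m+1) (d⁄dX ℚ (d⁄dX ℚ (VV^(j+1))))
            = coeff (R := ℚ) (2*m+1+2) (VV^(j+1)) * ((2*(m:ℚ)+2)*(2*(m:ℚ)+3)) := by
          rw [coeff_d2]; push_cast; ring
        rw [d2Vpow, map_add, coeff_C_mul, coeff_C_mul, iho (j+1), iho j] at hc
        have h2 : coeff (R := ℚ) (2*m+1+2) (VV^(j+1)) * ((2*(m:ℚ)+2)*(2*(m:ℚ)+3)) = 0 := by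
          rw [← hc]; ring
        have hne : ((2*(m:ℚ)+2)*(2*(m:ℚ)+3)) ≠ 0 := by positivity
        rcases mul_eq_zero.mp h2 with h | h
        · rw [show 2*(m+1)+1 = 2*m+1+2 by ring]; exact h
        · exact absurd h hne

lemma T_eq_zero : ∀ m k : ℕ, m < k → centralFactorialT m k = 0 := by
  intro m
  induction m with
  | zero =>
    intro k h
    cases k with
    | zero => omega
    | succ j => rfl
  | succ n ih =>
    intro k h
    cases k with
    | zero => omega
    | succ j =>
      rw [show centralFactorialT (n+1) (j+1)
          = centralFactorialT n j + (j+1)^2 * centralFactorialT n (j+1) from rfl,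
        ih j (by omega), ih (j+1) (by omega)]
      ring

noncomputable def cq (k : ℕ) : ℚ := (-1)^(k-1) * (k.factorial:ℚ)^2 / ((2*k).factorial : ℚ)

lemma cq_one : cq 1 = 1/2 := by
  norm_num [cq, Nat.factorial]

lemma cqrec (k : ℕ) : 2*(2*(k:ℚ)+3) * cq (k+2) = -((k:ℚ)+2) * cq (k+1) := by
  unfold cq
  have h1 : (k+2).factorial = (k+2) * (k+1).factorial := rfl
  have h2 : (2*(k+2)).factorial = (2*k+4) * ((2*k+3) * (2*(k+1)).factorial) := by
    rw [show 2*(k+2) = (2*k+3)+1 by ring, Nat.factorial_succ, show 2*k+3 = (2*(k+1))+1 by ring,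
      Nat.factorial_succ, show 2*(k+1)+1 = 2*k+3 by ring, show (2*k+3)+1 = 2*k+4 by ring]
  have h3 : ((2*(k+1)).factorial : ℚ) ≠ 0 := Nat.cast_ne_zero.mpr (Nat.factorial_ne_zero _)
  have h4 : (k+2-1) = (k+1-1) + 1 := by omega
  rw [h1, h2, h4, pow_succ]
  push_cast
  field_simp
  ring

noncomputable def HK (K : ℕ) : PowerSeries ℚ := ∑ k ∈ range K, C (R := ℚ) (cq (k+1)) * VV^(k+1)

lemma L14 : ∀ K, WW * d⁄dX ℚ (HK (K+1))
    = VV + (2 - VV) * HK (K+1) + C (R := ℚ) (((K:ℚ)+2) * cq (K+1)) * VV^(K+2) := by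
  intro K
  induction K with
  | zero =>
    rw [HK]
    rw [Finset.sum_range_one]
    have hD : d⁄dX ℚ (C (R := ℚ) (cq 1) * VV^(0+1)) = C (R := ℚ) (cq 1) * WW := by
      simp [smul_eq_mul, dV]
    rw [hD, cq_one]
    have h2 : C (R := ℚ) ((1:ℚ)/2) * 2 = 1 := by
      rw [show (2:PowerSeries ℚ) = C (R := ℚ) 2 from (map_ofNat (C (R := ℚ)) 2).symm, ← map_mul]; norm_num
    have h3 : C (R := ℚ) (((0:ℕ):ℚ)+2) = 2 := by
      rw [show (2:PowerSeries ℚ) = C (R := ℚ) 2 from (map_ofNat (C (R := ℚ)) 2).symm]; norm_num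
    rw [map_mul, h3]
    linear_combination (C (R := ℚ) ((1:ℚ)/2)) * hW2 + VV * h2
  | succ K ih =>
    have hsum : HK (K+2) = HK (K+1) + C (R := ℚ) (cq (K+2)) * VV^(K+2) := by
      rw [HK, HK, Finset.sum_range_succ]
    rw [hsum]
    have hD : d⁄dX ℚ (HK (K+1) + C (R := ℚ) (cq (K+2)) * VV^(K+2))
        = d⁄dX ℚ (HK (K+1)) + C (R := ℚ) (cq (K+2)) * (C (R := ℚ) ((K:ℚ)+1+1) * VV^(K+1) * WW) := by
      rw [map_add]
      congr 1
      rw [show (K+2) = (K+1)+1 from rfl, Derivation.leibniz, dVpow (K+1), derivative_C]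
      simp [smul_eq_mul]
    rw [hD]
    have hC := congrArg (C (R := ℚ)) (cqrec K)
    push_cast at hC ⊢
    simp only [map_mul, map_neg, map_add, map_ofNat, map_one] at hC ih ⊢
    linear_combination ih + (C (R := ℚ) (cq (K+2)) * (C (R := ℚ) (K:ℚ)+2) * VV^(K+1)) * hW2
      + VV^(K+2) * hC

noncomputable def aa (m : ℕ) : ℚ :=
  ∑ k ∈ Icc 1 m, (-1:ℚ)^(k-1) * centralFactorialT m k * ((k.factorial:ℚ))^2

noncomputable def HH : PowerSeries ℚ :=
  mk fun N => if N % 2 = 0 then aa (N/2) / (N.factorial:ℚ) else 0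

lemma cq_mul_fact (k : ℕ) :
    cq (k+1) * ((2*(k+1)).factorial : ℚ) = (-1:ℚ)^k * ((k+1).factorial:ℚ)^2 := by
  unfold cq
  have h3 : ((2*(k+1)).factorial : ℚ) ≠ 0 := Nat.cast_ne_zero.mpr (Nat.factorial_ne_zero _)
  have h4 : (k+1-1) = k := by omega
  rw [h4]
  field_simp

lemma aa_eq (m K : ℕ) (h : m ≤ K) :
    aa m = ∑ k ∈ range K, (-1:ℚ)^k * ((k+1).factorial:ℚ)^2 * (centralFactorialT m (k+1) : ℚ) := by
  rw [← Finset.sum_subset (Finset.range_subset_range.mpr h)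
    (fun x _ hx => by
      rw [T_eq_zero m (x+1) (by simp at hx; omega)]
      simp)]
  rw [aa, ← Finset.Ico_add_one_right_eq_Icc, Finset.sum_Ico_eq_sum_range]
  apply Finset.sum_congr (by norm_num)
  intro k hk
  rw [show 1 + k = k + 1 by omega, show k + 1 - 1 = k from rfl]
  ring

lemma coeff_V_pow_zero (n k : ℕ) (h : n < 2*k) : coeff (R := ℚ) n (VV^k) = 0 := by
  rcases Nat.even_or_odd n with he | ho
  · obtain ⟨m, hm⟩ := he
    have := (lemV m).1 k
    rw [T_eq_zero m k (by omega)] at this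
    have hf : ((2*m).factorial : ℚ) ≠ 0 := Nat.cast_ne_zero.mpr (Nat.factorial_ne_zero _)
    have h2 : n = 2*m := by omega
    rw [h2]
    have := this
    simp at this
    rcases this with h' | h'
    · exact absurd h' (Nat.factorial_ne_zero _)
    · exact h'
  · obtain ⟨m, hm⟩ := ho
    rw [hm]
    exact (lemV m).2 k

lemma L13 (K n : ℕ) (h : n ≤ 2*K+1) : coeff (R := ℚ) n HH = coeff (R := ℚ) n (HK K) := by
  rcases Nat.even_or_odd n with he | ho
  · obtain ⟨m, hm⟩ := he
    have hm2 : n = 2*m := by omega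
    subst hm2
    have hf : ((2*m).factorial : ℚ) ≠ 0 := Nat.cast_ne_zero.mpr (Nat.factorial_ne_zero _)
    apply mul_left_cancel₀ hf
    have lhs : ((2*m).factorial : ℚ) * coeff (R := ℚ) (2*m) HH = aa m := by
      rw [HH, coeff_mk, if_pos (by omega : (2*m) % 2 = 0)]
      rw [show (2*m)/2 = m by omega]
      field_simp
    rw [lhs, HK, map_sum, Finset.mul_sum, aa_eq m K (by omega)]
    apply Finset.sum_congr rfl
    intro k hk
    rw [coeff_C_mul]
    symm
    have hv := (lemV m).1 (k+1)
    have := cq_mul_fact k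
    calc ((2*m).factorial:ℚ) * (cq (k+1) * coeff (R := ℚ) (2*m) (VV^(k+1)))
        = cq (k+1) * (((2*m).factorial:ℚ) * coeff (R := ℚ) (2*m) (VV^(k+1))) := by ring
      _ = cq (k+1) * (((2*(k+1)).factorial:ℚ) * (centralFactorialT m (k+1):ℚ)) := by rw [hv]
      _ = (cq (k+1) * ((2*(k+1)).factorial:ℚ)) * (centralFactorialT m (k+1):ℚ) := by ring
      _ = (-1:ℚ)^k * ((k+1).factorial:ℚ)^2 * (centralFactorialT m (k+1):ℚ) := by rw [this]
  · obtain ⟨m, hm⟩ := ho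
    subst hm
    rw [HH, coeff_mk, if_neg (by omega : ¬ (2*m+1) % 2 = 0)]
    rw [HK, map_sum]
    symm
    apply Finset.sum_eq_zero
    intro k hk
    rw [coeff_C_mul, (lemV m).2 (k+1), mul_zero]

lemma odeHH : WW * d⁄dX ℚ HH = VV + (2 - VV) * HH := by
  ext N
  have hg : ∀ j, j ≤ 2*(N+1)+1 → coeff (R := ℚ) j (HH - HK (N+1)) = 0 := by
    intro j hj
    rw [map_sub, L13 (N+1) j hj, sub_self]
  have e1 : coeff (R := ℚ) N (WW * d⁄dX ℚ (HH - HK (N+1))) = 0 := by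
    rw [coeff_mul]
    apply Finset.sum_eq_zero
    intro p hp
    rw [Finset.HasAntidiagonal.mem_antidiagonal] at hp
    rw [coeff_derivative, hg (p.2+1) (by omega), zero_mul, mul_zero]
  have e2 : coeff (R := ℚ) N ((2 - VV) * (HH - HK (N+1))) = 0 := by
    rw [coeff_mul]
    apply Finset.sum_eq_zero
    intro p hp
    rw [Finset.HasAntidiagonal.mem_antidiagonal] at hp
    rw [hg p.2 (by omega), mul_zero]
  have e3 : coeff (R := ℚ) N (C (R := ℚ) (((N:ℚ)+2) * cq (N+1)) * VV^(N+2)) = 0 := by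
    rw [coeff_C_mul, coeff_V_pow_zero N (N+2) (by omega), mul_zero]
  have hs1 : WW * d⁄dX ℚ HH
      = WW * d⁄dX ℚ (HK (N+1)) + WW * d⁄dX ℚ (HH - HK (N+1)) := by
    rw [map_sub]; ring
  have hs2 : (2 - VV) * HH
      = (2 - VV) * HK (N+1) + (2 - VV) * (HH - HK (N+1)) := by ring
  rw [hs1, map_add, e1, add_zero, L14 N, hs2]
  rw [map_add, map_add, map_add, map_add, e2, e3, add_zero, add_zero]

noncomputable def RR : PowerSeries ℚ := uu^2 + C (R := ℚ) (1/2) * (X * uu * (1 - uu^2))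

lemma hc2 : (2:PowerSeries ℚ) * C (R := ℚ) (1/2) = 1 := by
  rw [show (2:PowerSeries ℚ) = C (R := ℚ) 2 from (map_ofNat (C (R := ℚ)) 2).symm, ← map_mul]; norm_num

lemma dR : d⁄dX ℚ RR = 2*uu*(C (R := ℚ) (1/2) * (1 - uu^2))
    + C (R := ℚ) (1/2) * (uu*(1-uu^2) + X * (C (R := ℚ) (1/2)*(1-uu^2)) * (1-uu^2)
      + X * uu * (-(uu*(1-uu^2)))) := by
  rw [RR]
  rw [map_add]
  congr 1
  · simp only [pow_two, Derivation.leibniz, smul_eq_mul, du]; ring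
  · rw [Derivation.leibniz, derivative_C, smul_eq_mul, smul_eq_mul, mul_zero, add_zero]
    congr 1
    rw [Derivation.leibniz, smul_eq_mul, smul_eq_mul, dS,
      Derivation.leibniz, smul_eq_mul, smul_eq_mul, du, derivative_X]
    ring

lemma odeR : WW * d⁄dX ℚ RR = VV + (2 - VV) * RR := by
  rw [dR, RR, WW, VV]
  have h1 : C (R := ℚ) (1/2) * 2 = 1 := by linear_combination hc2
  linear_combination (-4 + 3*uu*X + 6*uu^2 - 3*uu^3*X) * hSt
    + (-3*uu*X + 3*uu*tt*X + 2*uu*tt*X*(C (R := ℚ) (1/2)) + 6*uu^2*tt + 3*uu^3*X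
      - 6*uu^3*tt*X - 4*uu^3*tt*X*(C (R := ℚ) (1/2)) - 6*uu^4*tt + 3*uu^5*tt*X
      + 2*uu^5*tt*X*(C (R := ℚ) (1/2))) * h1


lemma d2XU : d⁄dX ℚ (d⁄dX ℚ (X * uu)) = 1 - RR := by
  have h1 : d⁄dX ℚ (X * uu) = uu + X * (C (R := ℚ) (1/2) * (1 - uu^2)) := by
    rw [Derivation.leibniz, smul_eq_mul, smul_eq_mul, du, derivative_X]; ring
  rw [h1, map_add, Derivation.leibniz, smul_eq_mul, smul_eq_mul, du, derivative_X]
  rw [show d⁄dX ℚ (C (R := ℚ) (1/2) * (1 - uu^2)) = C (R := ℚ) (1/2) * (-(uu*(1-uu^2))) by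
    rw [Derivation.leibniz, smul_eq_mul, smul_eq_mul, derivative_C, dS]; ring]
  rw [RR]
  have h2 : C (R := ℚ) (1/2) * 2 = 1 := by linear_combination hc2
  linear_combination (1 - uu^2) * h2

lemma coeff1_u : coeff (R := ℚ) 1 uu = 1/2 := by
  have := congrArg (coeff (R := ℚ) 0) du2
  rw [show (2:PowerSeries ℚ) = C (R := ℚ) 2 from (map_ofNat (C (R := ℚ)) 2).symm, coeff_C_mul,
    coeff_derivative] at this
  rw [map_sub, coeff_zero_eq_constantCoeff, map_pow, u0] at this
  simp at this
  linarith

lemma coeff1_W : coeff (R := ℚ) 1 WW = 2 := by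
  rw [WW, show (4:PowerSeries ℚ)*uu*tt = C (R := ℚ) 4 * (uu*tt) by
    rw [show (4:PowerSeries ℚ) = C (R := ℚ) 4 from (map_ofNat (C (R := ℚ)) 4).symm]; ring]
  rw [coeff_C_mul, coeff_mul]
  rw [Finset.Nat.antidiagonal_succ]
  simp [u0, cct, coeff1_u, coeff_zero_eq_constantCoeff]
  norm_num

lemma uniq (d : PowerSeries ℚ) (hode : WW * d⁄dX ℚ d = (2 - VV) * d)
    (h0 : coeff (R := ℚ) 0 d = 0) (h1 : coeff (R := ℚ) 1 d = 0) : d = 0 := by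
  ext N
  rw [map_zero]
  induction N using Nat.strong_induction_on with
  | _ N ih =>
    match N, ih with
    | 0, _ => exact h0
    | 1, _ => exact h1
    | (M+2), ih =>
      have hL : coeff (R := ℚ) (M+2) (WW * d⁄dX ℚ d)
          = (2*(M:ℚ)+4) * coeff (R := ℚ) (M+2) d := by
        rw [coeff_mul, Finset.sum_eq_single (1, M+1)]
        · rw [coeff_derivative, coeff1_W]
          push_cast; ring
        · rintro ⟨i, j⟩ hp hne
          rw [Finset.HasAntidiagonal.mem_antidiagonal] at hp
          rcases Nat.eq_zero_or_pos i with hi | hi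
          · subst hi
            rw [coeff_zero_eq_constantCoeff, ccW, zero_mul]
          · rcases Nat.lt_or_ge i 2 with h2 | h2
            · have hi1 : i = 1 := by omega
              have hj1 : j = M+1 := by omega
              exact absurd (by rw [hi1, hj1]) hne
            · rw [coeff_derivative, ih (j+1) (by omega), zero_mul, mul_zero]
        · intro h
          exact absurd (Finset.HasAntidiagonal.mem_antidiagonal.mpr (by omega)) h
      have hc2V : coeff (R := ℚ) 0 (2 - VV) = 2 := by
        rw [coeff_zero_eq_constantCoeff, map_sub, ccV, map_ofNat]; ring
      have hR : coeff (R := ℚ) (M+2) ((2 - VV) * d) = 2 * coeff (R := ℚ) (M+2) d := by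
        rw [coeff_mul, Finset.sum_eq_single (0, M+2)]
        · rw [hc2V]
        · rintro ⟨i, j⟩ hp hne
          rw [Finset.HasAntidiagonal.mem_antidiagonal] at hp
          have hi : 0 < i := by
            rcases Nat.eq_zero_or_pos i with h' | h'
            · have hj : j = M+2 := by omega
              exact absurd (by rw [h', hj]) hne
            · exact h'
          rw [ih j (by omega), mul_zero]
        · intro h
          exact absurd (Finset.HasAntidiagonal.mem_antidiagonal.mpr (by omega)) h
      have heq := congrArg (coeff (R := ℚ) (M+2)) hode
      rw [hL, hR] at heq
      have hx : (2*(M:ℚ)+2) * coeff (R := ℚ) (M+2) d = 0 := by linear_combination heq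
      have hne2 : (2*(M:ℚ)+2) ≠ 0 := by positivity
      exact (mul_eq_zero.mp hx).resolve_left hne2

lemma coeff0_HH : coeff (R := ℚ) 0 HH = 0 := by
  rw [HH, coeff_mk]
  norm_num [aa]

lemma coeff1_HH : coeff (R := ℚ) 1 HH = 0 := by
  rw [HH, coeff_mk]
  norm_num

lemma coeff0_RR : coeff (R := ℚ) 0 RR = 0 := by
  rw [RR, coeff_zero_eq_constantCoeff]
  simp [u0]

lemma coeff1_RR : coeff (R := ℚ) 1 RR = 0 := by
  rw [RR, map_add]
  have h1 : coeff (R := ℚ) 1 (uu^2) = 0 := by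
    rw [pow_two, coeff_mul, Finset.Nat.antidiagonal_succ]
    simp [u0, coeff_zero_eq_constantCoeff]
  have h2 : coeff (R := ℚ) 1 (C (R := ℚ) (1/2) * (X * uu * (1 - uu^2))) = 0 := by
    rw [coeff_C_mul, show X * uu * (1 - uu^2) = X * (uu * (1 - uu^2)) by ring,
      coeff_succ_X_mul, coeff_zero_eq_constantCoeff, map_mul, u0]
    ring
  rw [h1, h2]; ring

lemma HHRR : HH = RR := by
  have hode : WW * d⁄dX ℚ (HH - RR) = (2 - VV) * (HH - RR) := by
    rw [map_sub]
    linear_combination odeHH - odeR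
  have h0 : coeff (R := ℚ) 0 (HH - RR) = 0 := by
    rw [map_sub, coeff0_HH, coeff0_RR]; ring
  have h1 : coeff (R := ℚ) 1 (HH - RR) = 0 := by
    rw [map_sub, coeff1_HH, coeff1_RR]; ring
  have := uniq (HH - RR) hode h0 h1
  linear_combination this

lemma hgs : genocchiSeries = X - X * uu := by
  have key : (1 - uu) * (1 + EE) = 2 := by linear_combination -huE
  have h2 : 1 - uu = 2 * (1 + EE)⁻¹ := by
    apply mul_right_cancel₀ oneE_ne
    rw [key, mul_assoc, PowerSeries.inv_mul_cancel _ (by rw [cc_oneE]; norm_num), mul_one]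
  have : genocchiSeries = X * (1 - uu) := by
    rw [genocchiSeries, h2, show PowerSeries.exp ℚ = EE from rfl]
    ring
  rw [this]; ring

lemma coeff_Xu (n : ℕ) (hn : 1 ≤ n) :
    coeff (R := ℚ) (2*n+2) (X * uu) * (((2*n).factorial : ℚ) * ((2*(n:ℚ)+1)*(2*(n:ℚ)+2)))
      = -(aa n) := by
  have hfne : (((2*n).factorial : ℚ)) ≠ 0 := Nat.cast_ne_zero.mpr (Nat.factorial_ne_zero _)
  have h := congrArg (coeff (R := ℚ) (2*n)) d2XU
  rw [← HHRR, coeff_d2] at h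
  rw [map_sub, coeff_one, if_neg (by omega : ¬ 2*n = 0)] at h
  simp only [HH] at h
  rw [coeff_mk, if_pos (by omega : (2*n) % 2 = 0), show (2*n)/2 = n by omega] at h
  field_simp at h
  rw [show (2*n+2) = (2*n+1)+1 from rfl, coeff_succ_X_mul]
  rw [show (2*n+2) = (2*n+1)+1 from rfl, coeff_succ_X_mul] at h
  push_cast at h
  linear_combination h

theorem sum_centralFactorialT_sq_genocchi (n : ℕ) (hn : 1 ≤ n) :
    ∑ k ∈ Finset.Icc 1 n, (-1 : ℚ) ^ (k - 1) * centralFactorialT n k *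
        ((k.factorial : ℚ)) ^ 2 =
      (-1) ^ (n - 1) * genocchi (n + 1) := by
  have hsum : ∑ k ∈ Finset.Icc 1 n, (-1 : ℚ) ^ (k - 1) * centralFactorialT n k *
      ((k.factorial : ℚ)) ^ 2 = aa n := rfl
  rw [hsum]
  have hfne : (((2*n).factorial : ℚ)) ≠ 0 := Nat.cast_ne_zero.mpr (Nat.factorial_ne_zero _)
  have hXu := coeff_Xu n hn
  have hgcoeff : coeff (R := ℚ) (2*(n+1)) genocchiSeries
      = aa n / (((2*n).factorial : ℚ) * ((2*(n:ℚ)+1)*(2*(n:ℚ)+2))) := by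
    rw [hgs, map_sub, show 2*(n+1) = 2*n+2 by ring, coeff_X, if_neg (by omega : ¬ 2*n+2 = 1)]
    have hprod2 : ((2*n).factorial : ℚ) * ((2*(n:ℚ)+1)*(2*(n:ℚ)+2)) ≠ 0 := by
      apply mul_ne_zero hfne; positivity
    rw [eq_div_iff hprod2]
    linear_combination -hXu
  have hfact : ((2*(n+1)).factorial : ℚ)
      = ((2*n).factorial : ℚ) * ((2*(n:ℚ)+1)*(2*(n:ℚ)+2)) := by
    rw [show 2*(n+1) = (2*n+1)+1 by ring, Nat.factorial_succ, Nat.factorial_succ]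
    push_cast; ring
  have hgen : genocchi (n+1) = (-1:ℚ)^(n+1) * aa n := by
    rw [genocchi, hgcoeff, hfact]
    have hprod : ((2*n).factorial : ℚ) * ((2*(n:ℚ)+1)*(2*(n:ℚ)+2)) ≠ 0 := by
      apply mul_ne_zero hfne; positivity
    field_simp
  rw [hgen]
  have hpow : (-1:ℚ)^(n-1) * (-1:ℚ)^(n+1) = 1 := by
    rw [← pow_add, show (n-1)+(n+1) = 2*n by omega, pow_mul]
    norm_num
  calc aa n = ((-1:ℚ)^(n-1) * (-1:ℚ)^(n+1)) * aa n := by rw [hpow]; ring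
    _ = (-1:ℚ)^(n-1) * ((-1:ℚ)^(n+1) * aa n) := by ring
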